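/- Let d be a metric on a finite set D of n points, let γ > 1, and let C=(C_1,…,C_k) be an (α,γ)-clustering of D. Let i≠j, let D'⊆C_i and D''⊆C_j, and let x∈D' and y,y'∈D''. Then d(x,y)/d(x,y') ≤ (γ²+1)/(γ−1)². -/

import Mathlib

open Finset

/-- Average distance from `x` to the points of the cluster `C`
(excluding `x` itself if `x ∈ C`; note `dist x x = 0`). -/
noncomputable def avgD {α : Type*} [DecidableEq α] [MetricSpace α]
    (x : α) (C : Finset α) : ℝ :=
  (∑ y ∈ C, dist x y) / (if x ∈ C then ((C.card : ℝ) - 1) else (C.card : ℝ))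

/-- `C` is a `k`-clustering of the finite set `D`: a partition of `D` into `k`
nonempty clusters. -/
def IsClustering {α : Type*} [DecidableEq α] (D : Finset α) {k : ℕ}
    (C : Fin k → Finset α) : Prop :=
  (∀ i, (C i).Nonempty) ∧ (∀ i j, i ≠ j → Disjoint (C i) (C j)) ∧
    Finset.univ.biUnion C = D

/-- `C` is an `(a, γ)`-clustering of `D`: a `k`-clustering whose clusters all
have at least `a·|D|` points, and every point is (on average) at least a factor
`γ` closer to its own cluster than to any other cluster. -/
def IsAGClustering {α : Type*} [DecidableEq α] [MetricSpace α]
    (D : Finset α) (a γ : ℝ) {k : ℕ} (C : Fin k → Finset α) : Prop :=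
  IsClustering D C ∧ (∀ i, a * (D.card : ℝ) ≤ ((C i).card : ℝ)) ∧
    (∀ i j, i ≠ j → ∀ x ∈ C i, γ * avgD x (C i) ≤ avgD x (C j))

lemma avgD_nonneg {α : Type*} [DecidableEq α] [MetricSpace α] (x : α) (C : Finset α) :
    0 ≤ avgD x C := by
  unfold avgD
  split_ifs with h
  · apply div_nonneg (Finset.sum_nonneg fun _ _ => dist_nonneg)
    have h1 : 1 ≤ C.card := Finset.card_pos.mpr ⟨x, h⟩
    have : (1:ℝ) ≤ (C.card : ℝ) := by exact_mod_cast h1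
    linarith
  · exact div_nonneg (Finset.sum_nonneg fun _ _ => dist_nonneg) (by positivity)

lemma sum_div_card_le_avgD {α : Type*} [DecidableEq α] [MetricSpace α]
    {x : α} {C : Finset α} (hx : x ∈ C) :
    (∑ z ∈ C, dist x z) / (C.card : ℝ) ≤ avgD x C := by
  unfold avgD
  rw [if_pos hx]
  rcases eq_or_lt_of_le (Finset.one_le_card.mpr ⟨x, hx⟩) with h | h
  · obtain ⟨a, ha⟩ := Finset.card_eq_one.mp h.symm
    have hxa : x = a := by have := ha ▸ hx; simpa using this
    subst hxa
    simp [ha]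
  · have h2 : (2:ℝ) ≤ (C.card : ℝ) := by exact_mod_cast h
    have hS : 0 ≤ ∑ z ∈ C, dist x z := Finset.sum_nonneg fun _ _ => dist_nonneg
    gcongr
    · linarith
    · linarith

/-- in an `(a, γ)`-clustering with `γ > 1`, for subsets
`D' ⊆ C i`, `D'' ⊆ C j` (`i ≠ j`), `x ∈ D'` and `y, y' ∈ D''`:
`d(x,y)/d(x,y') ≤ (γ²+1)/(γ−1)²`. -/
theorem ag_clustering_ratio_bound
    {α : Type*} [DecidableEq α] [MetricSpace α]
    (D : Finset α) (a γ : ℝ) (hγ : 1 < γ)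
    {k : ℕ} (C : Fin k → Finset α) (hC : IsAGClustering D a γ C)
    (i j : Fin k) (hij : i ≠ j)
    (D' D'' : Finset α) (hD' : D' ⊆ C i) (hD'' : D'' ⊆ C j)
    (x : α) (hx : x ∈ D') (y : α) (hy : y ∈ D'') (y' : α) (hy' : y' ∈ D'') :
    dist x y / dist x y' ≤ (γ ^ 2 + 1) / (γ - 1) ^ 2 := by
  obtain ⟨⟨hne, hdisj, -⟩, -, hγsep⟩ := hC
  have hγ0 : (0:ℝ) < γ := lt_trans one_pos hγ
  have hxi : x ∈ C i := hD' hx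
  have hyj : y ∈ C j := hD'' hy
  have hy'j : y' ∈ C j := hD'' hy'
  have hxj : x ∉ C j := fun h => Finset.disjoint_left.mp (hdisj i j hij) hxi h
  have hnj : (0:ℝ) < ((C j).card : ℝ) := by exact_mod_cast Finset.card_pos.mpr (hne j)
  have hni : (0:ℝ) < ((C i).card : ℝ) := by exact_mod_cast Finset.card_pos.mpr (hne i)
  set B := avgD x (C j) with hBdef
  have hBeq : B = (∑ z ∈ C j, dist x z) / ((C j).card : ℝ) := by
    rw [hBdef]; unfold avgD; rw [if_neg hxj]
  have hA : γ * avgD x (C i) ≤ B := hγsep i j hij x hxi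
  have hA0 : 0 ≤ avgD x (C i) := avgD_nonneg _ _
  have key : ∀ w ∈ C j, B * (γ - 1) ≤ γ * dist x w ∧
      γ * (γ - 1) * dist x w ≤ (γ ^ 2 + 1) * B := by
    intro w hw
    have hwi : w ∉ C i := fun h => Finset.disjoint_left.mp (hdisj i j hij) h hw
    have hE : γ * avgD w (C j) ≤ avgD w (C i) := hγsep j i hij.symm w hw
    have hE0 : 0 ≤ avgD w (C j) := avgD_nonneg _ _
    have h1 : avgD w (C i) ≤ dist x w + avgD x (C i) := by
      have hFeq : avgD w (C i) = (∑ z ∈ C i, dist w z) / ((C i).card : ℝ) := by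
        unfold avgD; rw [if_neg hwi]
      rw [hFeq]
      calc (∑ z ∈ C i, dist w z) / ((C i).card : ℝ)
          ≤ (∑ z ∈ C i, (dist x w + dist x z)) / ((C i).card : ℝ) := by
            gcongr with z hz
            calc dist w z ≤ dist w x + dist x z := dist_triangle _ _ _
              _ = dist x w + dist x z := by rw [dist_comm]
        _ = dist x w + (∑ z ∈ C i, dist x z) / ((C i).card : ℝ) := by
            rw [Finset.sum_add_distrib, Finset.sum_const, nsmul_eq_mul, add_div,
              mul_div_cancel_left₀ _ (ne_of_gt hni)]
        _ ≤ dist x w + avgD x (C i) := by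
            exact add_le_add_right (sum_div_card_le_avgD hxi) _
    have h2 : B ≤ dist x w + avgD w (C j) := by
      rw [hBeq]
      calc (∑ z ∈ C j, dist x z) / ((C j).card : ℝ)
          ≤ (∑ z ∈ C j, (dist x w + dist w z)) / ((C j).card : ℝ) := by
            gcongr with z hz
            exact dist_triangle _ _ _
        _ = dist x w + (∑ z ∈ C j, dist w z) / ((C j).card : ℝ) := by
            rw [Finset.sum_add_distrib, Finset.sum_const, nsmul_eq_mul, add_div,
              mul_div_cancel_left₀ _ (ne_of_gt hnj)]
        _ ≤ dist x w + avgD w (C j) := by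
            exact add_le_add_right (sum_div_card_le_avgD hw) _
    have h3 : dist x w ≤ B + avgD w (C j) := by
      have hsum : ((C j).card : ℝ) * dist x w ≤
          (∑ z ∈ C j, dist x z) + (∑ z ∈ C j, dist w z) := by
        rw [← Finset.sum_add_distrib]
        calc ((C j).card : ℝ) * dist x w = ∑ _z ∈ C j, dist x w := by
              rw [Finset.sum_const, nsmul_eq_mul]
          _ ≤ ∑ z ∈ C j, (dist x z + dist w z) := by
              apply Finset.sum_le_sum; intro z hz
              calc dist x w ≤ dist x z + dist z w := dist_triangle _ _ _
                _ = dist x z + dist w z := by rw [dist_comm z w]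
      have : dist x w ≤ (∑ z ∈ C j, dist x z) / ((C j).card : ℝ) +
          (∑ z ∈ C j, dist w z) / ((C j).card : ℝ) := by
        rw [← add_div, le_div_iff₀ hnj]
        linarith [hsum]
      calc dist x w ≤ (∑ z ∈ C j, dist x z) / ((C j).card : ℝ) +
            (∑ z ∈ C j, dist w z) / ((C j).card : ℝ) := this
        _ ≤ B + avgD w (C j) := by
            rw [hBeq]; exact add_le_add_right (sum_div_card_le_avgD hw) _
    constructor
    · nlinarith [mul_le_mul_of_nonneg_left h2 (sq_nonneg γ),
        mul_le_mul_of_nonneg_left hE hγ0.le,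
        mul_le_mul_of_nonneg_left h1 hγ0.le, hA, dist_nonneg (x := x) (y := w)]
    · nlinarith [mul_le_mul_of_nonneg_left h3 (sq_nonneg γ),
        mul_le_mul_of_nonneg_left hE hγ0.le,
        mul_le_mul_of_nonneg_left h1 hγ0.le, hA, dist_nonneg (x := x) (y := w)]
  have hd'pos : 0 < dist x y' := dist_pos.mpr (fun h => hxj (h ▸ hy'j))
  obtain ⟨low, -⟩ := key y' hy'j
  obtain ⟨-, up⟩ := key y hyj
  rw [div_le_div_iff₀ hd'pos (pow_pos (sub_pos.mpr hγ) 2)]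
  nlinarith [mul_le_mul_of_nonneg_right up (sub_pos.mpr hγ).le,
    mul_le_mul_of_nonneg_left low (show (0:ℝ) ≤ γ ^ 2 + 1 by positivity), hγ0]
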